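/- For Re(s) > 1, Σ_{n≥1} μ(n)² n² / (φ(n)² n^s) = Π_p (1 + (2 − 1/p)/((1−1/p)² p (p^s + 1))) · Σ_{n≥1} μ(n)²/n^s, an identity of Euler products/Dirichlet series. -/

import Mathlib

open scoped ArithmeticFunction
open scoped ArithmeticFunction.Moebius

open Complex

noncomputable def fAux (s : ℂ) (n : ℕ) : ℂ :=
  if n = 0 then 0 else
    ((μ n : ℂ)) ^ 2 * (n : ℂ) ^ 2 / ((Nat.totient n : ℂ) ^ 2 * (n : ℂ) ^ s)

noncomputable def gAux (s : ℂ) (n : ℕ) : ℂ :=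
  if n = 0 then 0 else ((μ n : ℂ)) ^ 2 / (n : ℂ) ^ s

lemma cpow_ne_zero' {n : ℕ} (hn : n ≠ 0) (s : ℂ) : ((n : ℂ)) ^ s ≠ 0 := by
  simp [Complex.cpow_eq_zero_iff, hn]

lemma fAux_one (s : ℂ) : fAux s 1 = 1 := by simp [fAux]

lemma gAux_one (s : ℂ) : gAux s 1 = 1 := by simp [gAux]

lemma fAux_mul (s : ℂ) {m n : ℕ} (h : m.Coprime n) :
    fAux s (m * n) = fAux s m * fAux s n := by
  rcases eq_or_ne m 0 with rfl | hm
  · rcases Nat.coprime_zero_left n |>.mp h with rfl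
    simp [fAux]
  rcases eq_or_ne n 0 with rfl | hn
  · rcases Nat.coprime_zero_right m |>.mp h with rfl
    simp [fAux]
  have hmn : m * n ≠ 0 := Nat.mul_ne_zero hm hn
  simp only [fAux, if_neg hm, if_neg hn, if_neg hmn]
  have hμ : ((μ (m * n) : ℤ) : ℂ) = ((μ m : ℤ) : ℂ) * ((μ n : ℤ) : ℂ) := by
    rw_mod_cast [ArithmeticFunction.isMultiplicative_moebius.map_mul_of_coprime h]
  have hφ : ((Nat.totient (m * n) : ℕ) : ℂ) = (Nat.totient m : ℂ) * (Nat.totient n : ℂ) := by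
    rw_mod_cast [Nat.totient_mul h]
  have hpow : (((m * n : ℕ)) : ℂ) ^ s = (m : ℂ) ^ s * (n : ℂ) ^ s := by
    push_cast
    exact Complex.natCast_mul_natCast_cpow m n s
  have h1 : (Nat.totient m : ℂ) ≠ 0 := Nat.cast_ne_zero.mpr (Nat.totient_pos.mpr (Nat.pos_of_ne_zero hm)).ne'
  have h2 : (Nat.totient n : ℂ) ≠ 0 := Nat.cast_ne_zero.mpr (Nat.totient_pos.mpr (Nat.pos_of_ne_zero hn)).ne'
  have h3 := cpow_ne_zero' hm s
  have h4 := cpow_ne_zero' hn s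
  rw [hμ, hφ, hpow]
  push_cast
  field_simp

lemma gAux_mul (s : ℂ) {m n : ℕ} (h : m.Coprime n) :
    gAux s (m * n) = gAux s m * gAux s n := by
  rcases eq_or_ne m 0 with rfl | hm
  · rcases Nat.coprime_zero_left n |>.mp h with rfl
    simp [gAux]
  rcases eq_or_ne n 0 with rfl | hn
  · rcases Nat.coprime_zero_right m |>.mp h with rfl
    simp [gAux]
  have hmn : m * n ≠ 0 := Nat.mul_ne_zero hm hn
  simp only [gAux, if_neg hm, if_neg hn, if_neg hmn]
  have hμ : ((μ (m * n) : ℤ) : ℂ) = ((μ m : ℤ) : ℂ) * ((μ n : ℤ) : ℂ) := by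
    rw_mod_cast [ArithmeticFunction.isMultiplicative_moebius.map_mul_of_coprime h]
  have hpow : (((m * n : ℕ)) : ℂ) ^ s = (m : ℂ) ^ s * (n : ℂ) ^ s := by
    push_cast
    exact Complex.natCast_mul_natCast_cpow m n s
  have h3 := cpow_ne_zero' hm s
  have h4 := cpow_ne_zero' hn s
  rw [hμ, hpow]
  push_cast
  field_simp

lemma fAux_pp (s : ℂ) {p : ℕ} (hp : p.Prime) {e : ℕ} (he : 2 ≤ e) :
    fAux s (p ^ e) = 0 := by
  have h0 : μ (p ^ e) = 0 := by
    rw [ArithmeticFunction.moebius_apply_prime_pow hp (by omega)]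
    simp [show e ≠ 1 by omega]
  simp [fAux, h0]

lemma gAux_pp (s : ℂ) {p : ℕ} (hp : p.Prime) {e : ℕ} (he : 2 ≤ e) :
    gAux s (p ^ e) = 0 := by
  have h0 : μ (p ^ e) = 0 := by
    rw [ArithmeticFunction.moebius_apply_prime_pow hp (by omega)]
    simp [show e ≠ 1 by omega]
  simp [gAux, h0]

lemma tsum_of_two {M : Type*} [AddCommMonoid M] [TopologicalSpace M] [T2Space M]
    (h : ℕ → M) (H : ∀ e, 2 ≤ e → h e = 0) : ∑' e, h e = h 0 + h 1 := by
  rw [tsum_eq_sum (s := {0, 1}) (fun b hb => H b (by simp at hb; omega))]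
  simp

lemma norm_fAux (s : ℂ) {n : ℕ} (hn : n ≠ 0) :
    ‖fAux s n‖ = ((μ n : ℝ)) ^ 2 * (n : ℝ) ^ 2 /
      ((Nat.totient n : ℝ) ^ 2 * (n : ℝ) ^ s.re) := by
  simp only [fAux, if_neg hn, norm_div, norm_mul, norm_pow,
    Complex.norm_natCast_cpow_of_pos (Nat.pos_of_ne_zero hn),
    Complex.norm_intCast, Complex.norm_natCast]
  rw [_root_.sq_abs]

lemma norm_gAux (s : ℂ) {n : ℕ} (hn : n ≠ 0) :
    ‖gAux s n‖ = ((μ n : ℝ)) ^ 2 / ((n : ℝ) ^ s.re) := by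
  simp only [gAux, if_neg hn, norm_div, norm_pow,
    Complex.norm_natCast_cpow_of_pos (Nat.pos_of_ne_zero hn),
    Complex.norm_intCast]
  rw [_root_.sq_abs]

lemma norm_fAux_prime_le (s : ℂ) (hs : 1 < s.re) {p : ℕ} (hp : p.Prime) :
    ‖fAux s p‖ ≤ 4 * ((p : ℝ) ^ s.re)⁻¹ := by
  rw [norm_fAux s hp.pos.ne', ArithmeticFunction.moebius_apply_prime hp,
    Nat.totient_prime hp]
  have hc : ((p - 1 : ℕ) : ℝ) = (p : ℝ) - 1 := by
    push_cast [Nat.cast_sub hp.one_le]; ring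
  rw [hc]
  have hq : (2 : ℝ) ≤ (p : ℝ) := by exact_mod_cast hp.two_le
  have hA : (0 : ℝ) < (p : ℝ) ^ s.re := Real.rpow_pos_of_pos (by linarith) _
  have h1 : (0 : ℝ) < ((p : ℝ) - 1) ^ 2 := by nlinarith
  rw [div_le_iff₀ (by positivity)]
  have h2 : 4 * ((p:ℝ) ^ s.re)⁻¹ * (((p:ℝ) - 1) ^ 2 * (p:ℝ) ^ s.re)
      = 4 * ((p:ℝ) - 1) ^ 2 := by field_simp
  rw [h2]
  push_cast
  nlinarith

lemma norm_gAux_le (s : ℂ) (n : ℕ) : ‖gAux s n‖ ≤ ‖fAux s n‖ := by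
  rcases eq_or_ne n 0 with rfl | hn
  · simp [fAux, gAux]
  rw [norm_fAux s hn, norm_gAux s hn]
  have hn' : (0:ℝ) < (n:ℝ) := by exact_mod_cast Nat.pos_of_ne_zero hn
  have h1 : (0:ℝ) < (n:ℝ) ^ s.re := Real.rpow_pos_of_pos hn' _
  have h2 : (0:ℝ) < (Nat.totient n : ℝ) := by
    exact_mod_cast Nat.totient_pos.mpr (Nat.pos_of_ne_zero hn)
  have h3 : (Nat.totient n : ℝ) ≤ (n:ℝ) := by exact_mod_cast Nat.totient_le n
  rw [div_le_div_iff₀ h1 (by positivity)]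
  have h4 : (Nat.totient n : ℝ) ^ 2 ≤ (n:ℝ) ^ 2 := by nlinarith
  nlinarith [sq_nonneg ((μ n : ℝ)), mul_nonneg (mul_nonneg (sq_nonneg ((μ n : ℝ)))
    (sub_nonneg.mpr h4)) h1.le]

lemma summable_norm_fAux (s : ℂ) (hs : 1 < s.re) : Summable fun n => ‖fAux s n‖ := by
  have hσ0 : 0 < s.re := by linarith
  set G : ℕ → ℝ := fun n => 4 * ((n : ℝ) ^ s.re)⁻¹ with hGdef
  have hG : Summable G := (Real.summable_nat_rpow_inv.mpr hs).mul_left 4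
  have hGnonneg : ∀ n, 0 ≤ G n := fun n => by positivity
  set F : ℕ → ℝ := fun n => ‖fAux s n‖ with hFdef
  have hF1 : F 1 = 1 := by simp [hFdef, fAux_one]
  have hFmul : ∀ {m n : ℕ}, m.Coprime n → F (m * n) = F m * F n := by
    intro m n h
    simp only [hFdef, fAux_mul s h, norm_mul]
  have hFpp : ∀ {p : ℕ}, p.Prime → Summable (fun e : ℕ => ‖F (p ^ e)‖) := by
    intro p hp
    apply summable_of_ne_finset_zero (s := ({0, 1} : Finset ℕ))
    intro e he
    simp only [Finset.mem_insert, Finset.mem_singleton] at he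
    have h0 : fAux s (p ^ e) = 0 := fAux_pp s hp (by omega)
    simp [hFdef, h0]
  have hFnonneg : ∀ n, 0 ≤ F n := fun n => norm_nonneg _
  apply summable_of_sum_le (c := Real.exp (∑' n, G n)) hFnonneg
  intro u
  set N : ℕ := u.sup id + 1 with hN
  have key := (EulerProduct.summable_and_hasSum_factoredNumbers_prod_filter_prime_tsum
    hF1 hFmul hFpp N.primesBelow).2
  set P : ℝ := ∏ p ∈ N.primesBelow with p.Prime, ∑' e : ℕ, F (p ^ e) with hP
  have hind : HasSum (Set.indicator (Nat.factoredNumbers N.primesBelow) F) P :=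
    (hasSum_subtype_iff_indicator).mp key
  have step1 : ∑ n ∈ u, F n ≤ P := by
    have heq : ∀ n ∈ u, F n = Set.indicator (Nat.factoredNumbers N.primesBelow) F n := by
      intro n hn
      rcases eq_or_ne n 0 with rfl | hn0
      · simp [Set.indicator, Nat.mem_factoredNumbers, hFdef, fAux]
      · rw [Set.indicator_of_mem]
        refine Nat.mem_factoredNumbers.mpr ⟨hn0, fun p hpl => ?_⟩
        have hple : p ≤ n := Nat.le_of_dvd (Nat.pos_of_ne_zero hn0)
          (Nat.dvd_of_mem_primeFactorsList hpl)
        have hnN : n < N := by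
          have : n ≤ u.sup id := Finset.le_sup (f := id) hn
          omega
        exact Nat.mem_primesBelow.mpr ⟨by omega, Nat.prime_of_mem_primeFactorsList hpl⟩
    rw [Finset.sum_congr rfl heq]
    exact Summable.sum_le_tsum u (fun i _ => Set.indicator_nonneg (fun n _ => hFnonneg n) i)
      hind.summable |>.trans_eq hind.tsum_eq
  refine step1.trans ?_
  have hloc : ∀ p ∈ N.primesBelow.filter Nat.Prime, ∑' e : ℕ, F (p ^ e) = 1 + F p := by
    intro p hp
    have hpp : p.Prime := Nat.prime_of_mem_primesBelow (Finset.mem_filter.mp hp).1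
    rw [tsum_of_two (fun e => F (p ^ e)) (fun e he => by
      simp [hFdef, fAux_pp s hpp he])]
    simp [hFdef, fAux_one]
  calc P = ∏ p ∈ N.primesBelow with p.Prime, (1 + F p) := Finset.prod_congr rfl hloc
    _ ≤ ∏ p ∈ N.primesBelow with p.Prime, Real.exp (G p) := by
        apply Finset.prod_le_prod
        · intro p _; positivity
        · intro p hp
          have hpp : p.Prime := Nat.prime_of_mem_primesBelow (Finset.mem_filter.mp hp).1
          have := norm_fAux_prime_le s hs hpp
          have h2 := Real.add_one_le_exp (G p)
          simp only [hFdef, hGdef] at *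
          linarith
    _ = Real.exp (∑ p ∈ N.primesBelow with p.Prime, G p) := (Real.exp_sum _ _).symm
    _ ≤ Real.exp (∑' n, G n) := by
        apply Real.exp_le_exp.mpr
        exact Summable.sum_le_tsum _ (fun i _ => hGnonneg i) hG

lemma summable_norm_gAux (s : ℂ) (hs : 1 < s.re) : Summable fun n => ‖gAux s n‖ :=
  (summable_norm_fAux s hs).of_nonneg_of_le (fun n => norm_nonneg _) (norm_gAux_le s)

lemma fAux_prime (s : ℂ) {p : ℕ} (hp : p.Prime) :
    fAux s p = (p : ℂ) ^ 2 / (((p : ℂ) - 1) ^ 2 * (p : ℂ) ^ s) := by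
  rw [fAux, if_neg hp.pos.ne', ArithmeticFunction.moebius_apply_prime hp,
    Nat.totient_prime hp]
  have hc : ((p - 1 : ℕ) : ℂ) = (p : ℂ) - 1 := by
    push_cast [Nat.cast_sub hp.one_le]; ring
  rw [hc]
  norm_num

lemma gAux_prime (s : ℂ) {p : ℕ} (hp : p.Prime) :
    gAux s p = 1 / (p : ℂ) ^ s := by
  rw [gAux, if_neg hp.pos.ne', ArithmeticFunction.moebius_apply_prime hp]
  norm_num

lemma norm_one_div_cpow_le (s : ℂ) (hs : 1 < s.re) {p : ℕ} (hp : p.Prime) :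
    ‖1 / (p : ℂ) ^ s‖ ≤ ((p : ℝ) ^ s.re)⁻¹ := by
  rw [norm_div, norm_one, Complex.norm_natCast_cpow_of_pos hp.pos]
  simp [one_div]

lemma rpow_gt_one (s : ℂ) (hs : 1 < s.re) {p : ℕ} (hp : p.Prime) :
    1 < (p : ℝ) ^ s.re := by
  have h2 : (2 : ℝ) ≤ (p : ℝ) := by exact_mod_cast hp.two_le
  calc (1:ℝ) = (2:ℝ) ^ (0:ℝ) := by norm_num
    _ < (2:ℝ) ^ s.re := Real.rpow_lt_rpow_of_exponent_lt (by norm_num) (by linarith)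
    _ ≤ (p : ℝ) ^ s.re := Real.rpow_le_rpow (by norm_num) h2 (by linarith)

lemma cpow_add_one_ne_zero (s : ℂ) (hs : 1 < s.re) {p : ℕ} (hp : p.Prime) :
    (p : ℂ) ^ s + 1 ≠ 0 := by
  intro h
  have h' : (p : ℂ) ^ s = -1 := by linear_combination h
  have hn := congrArg norm h'
  rw [Complex.norm_natCast_cpow_of_pos hp.pos, norm_neg, norm_one] at hn
  have := rpow_gt_one s hs hp
  linarith

lemma key_helper1 (P B : ℂ) (hP : P ≠ 0) (hP1 : P - 1 ≠ 0) (hB1 : B + 1 ≠ 0) :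
    (2 - 1 / P) / ((1 - 1 / P) ^ 2 * P * (B + 1))
      = (2 * P - 1) / ((P - 1) ^ 2 * (B + 1)) := by
  rw [div_eq_div_iff (by
      have hQ : (1:ℂ) - 1/P ≠ 0 := by
        rw [sub_ne_zero]; intro h; apply hP1; field_simp at h; rw [h]; ring
      exact mul_ne_zero (mul_ne_zero (pow_ne_zero 2 hQ) hP) hB1)
    (mul_ne_zero (pow_ne_zero 2 hP1) hB1)]
  field_simp

lemma key_helper2 (P B : ℂ) (hP1 : P - 1 ≠ 0) (hB : B ≠ 0) (hB1 : B + 1 ≠ 0) :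
    1 + P ^ 2 / ((P - 1) ^ 2 * B)
      = (1 + (2 * P - 1) / ((P - 1) ^ 2 * (B + 1))) * (1 + 1 / B) := by
  field_simp
  ring

lemma key_eq (s : ℂ) (hs : 1 < s.re) {p : ℕ} (hp : p.Prime) :
    1 + fAux s p =
      (1 + (2 - 1 / (p : ℂ)) /
        ((1 - 1 / (p : ℂ)) ^ 2 * (p : ℂ) * ((p : ℂ) ^ s + 1))) * (1 + gAux s p) := by
  rw [fAux_prime s hp, gAux_prime s hp]
  have hP : (p : ℂ) ≠ 0 := Nat.cast_ne_zero.mpr hp.pos.ne'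
  have hP1 : (p : ℂ) - 1 ≠ 0 := by
    rw [sub_ne_zero]
    exact_mod_cast fun h => hp.one_lt.ne' (Nat.cast_injective h)
  have hPs : (p : ℂ) ^ s ≠ 0 := cpow_ne_zero' hp.pos.ne' s
  have hPs1 : (p : ℂ) ^ s + 1 ≠ 0 := cpow_add_one_ne_zero s hs hp
  rw [key_helper1 _ _ hP hP1 hPs1]
  exact key_helper2 _ _ hP1 hPs hPs1

theorem dirichlet_series_moebius_sq_mul_sq_div_totient_sq (s : ℂ) (hs : 1 < s.re) :
    (∑' n : ℕ, if n = 0 then 0 else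
        ((μ n : ℂ)) ^ 2 * (n : ℂ) ^ 2 / ((Nat.totient n : ℂ) ^ 2 * (n : ℂ) ^ s))
      = (∏' p : Nat.Primes,
            (1 + (2 - 1 / ((p : ℕ) : ℂ)) /
              ((1 - 1 / ((p : ℕ) : ℂ)) ^ 2 * ((p : ℕ) : ℂ) * (((p : ℕ) : ℂ) ^ s + 1))))
        * ∑' n : ℕ, if n = 0 then 0 else ((μ n : ℂ)) ^ 2 / (n : ℂ) ^ s := by
  have hsum_f := summable_norm_fAux s hs
  have hsum_g := summable_norm_gAux s hs
  have hF0 : fAux s 0 = 0 := by simp [fAux]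
  have hG0 : gAux s 0 = 0 := by simp [gAux]
  have heF : ∀ p : Nat.Primes, (∑' e : ℕ, fAux s ((p : ℕ) ^ e)) = 1 + fAux s (p : ℕ) := by
    intro p
    rw [tsum_of_two _ (fun e he => fAux_pp s p.prop he), pow_zero, pow_one, fAux_one]
  have heG : ∀ p : Nat.Primes, (∑' e : ℕ, gAux s ((p : ℕ) ^ e)) = 1 + gAux s (p : ℕ) := by
    intro p
    rw [tsum_of_two _ (fun e he => gAux_pp s p.prop he), pow_zero, pow_one, gAux_one]
  have hF : HasProd (fun p : Nat.Primes => 1 + fAux s (p : ℕ)) (∑' n, fAux s n) := by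
    have := EulerProduct.eulerProduct_hasProd (f := fAux s) (fAux_one s)
      (fun h => fAux_mul s h) hsum_f hF0
    simpa only [heF] using this
  have hG : HasProd (fun p : Nat.Primes => 1 + gAux s (p : ℕ)) (∑' n, gAux s n) := by
    have := EulerProduct.eulerProduct_hasProd (f := gAux s) (gAux_one s)
      (fun h => gAux_mul s h) hsum_g hG0
    simpa only [heG] using this
  have hGlne : ∀ p : Nat.Primes, (1 : ℂ) + gAux s (p : ℕ) ≠ 0 := by
    intro p h
    rw [gAux_prime s p.prop] at h
    have h' : 1 / ((p : ℕ) : ℂ) ^ s = -1 := by linear_combination h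
    have hn := congrArg norm h'
    rw [norm_div, norm_one, Complex.norm_natCast_cpow_of_pos p.prop.pos, norm_neg,
      norm_one, div_eq_one_iff_eq (Real.rpow_pos_of_pos (by exact_mod_cast p.prop.pos) _).ne'] at hn
    have h2 := rpow_gt_one s hs p.prop
    linarith
  have hsumlog : Summable fun p : Nat.Primes => Complex.log (((1 : ℂ) + gAux s (p : ℕ))⁻¹) := by
    apply Summable.of_norm
    have hmaj : Summable fun p : Nat.Primes => (3 / 2 : ℝ) * (((p : ℕ) : ℝ) ^ s.re)⁻¹ := by
      exact ((Real.summable_nat_rpow_inv.mpr hs).mul_left (3 / 2)).comp_injective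
        Subtype.val_injective
    refine Summable.of_nonneg_of_le (fun p => norm_nonneg _) (fun p => ?_) hmaj
    have hz : ‖gAux s (p : ℕ)‖ ≤ (((p : ℕ) : ℝ) ^ s.re)⁻¹ := by
      rw [gAux_prime s p.prop]
      exact norm_one_div_cpow_le s hs p.prop
    have hple : (((p : ℕ) : ℝ) ^ s.re)⁻¹ ≤ 1 / 2 := by
      have h2 : (2 : ℝ) ≤ ((p : ℕ) : ℝ) := by exact_mod_cast p.prop.two_le
      have hps : (2 : ℝ) ≤ ((p : ℕ) : ℝ) ^ s.re :=
        calc (2 : ℝ) = (2 : ℝ) ^ (1 : ℝ) := by norm_num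
          _ ≤ (2 : ℝ) ^ s.re := Real.rpow_le_rpow_of_exponent_le (by norm_num) (by linarith)
          _ ≤ ((p : ℕ) : ℝ) ^ s.re := Real.rpow_le_rpow (by norm_num) h2 (by linarith)
      calc (((p : ℕ) : ℝ) ^ s.re)⁻¹ ≤ (2 : ℝ)⁻¹ := by
            apply inv_anti₀ (by norm_num) hps
        _ = 1 / 2 := by norm_num
    have hargne : ((1 : ℂ) + gAux s (p : ℕ)).arg ≠ Real.pi := by
      intro harg
      have := Complex.arg_eq_pi_iff.mp harg
      have hre : (1 : ℝ) / 2 ≤ ((1 : ℂ) + gAux s (p : ℕ)).re := by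
        have habs : |(gAux s (p : ℕ)).re| ≤ ‖gAux s (p : ℕ)‖ := Complex.abs_re_le_norm _
        have : -(1 / 2 : ℝ) ≤ (gAux s (p : ℕ)).re := by
          have := neg_abs_le (gAux s (p : ℕ)).re
          linarith [hz.trans hple]
        simp only [Complex.add_re, Complex.one_re]
        linarith
      linarith [this.1]
    rw [Complex.log_inv _ hargne, norm_neg]
    calc ‖Complex.log (1 + gAux s (p : ℕ))‖ ≤ 3 / 2 * ‖gAux s (p : ℕ)‖ :=
          Complex.norm_log_one_add_half_le_self (hz.trans hple)
      _ ≤ 3 / 2 * (((p : ℕ) : ℝ) ^ s.re)⁻¹ := by nlinarith [norm_nonneg (gAux s (p : ℕ))]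
  have hMGinv : Multipliable fun p : Nat.Primes => ((1 : ℂ) + gAux s (p : ℕ))⁻¹ :=
    Complex.multipliable_of_summable_log hsumlog
  have e1 : (∑' n : ℕ, if n = 0 then 0 else
      ((μ n : ℂ)) ^ 2 * (n : ℂ) ^ 2 / ((Nat.totient n : ℂ) ^ 2 * (n : ℂ) ^ s))
      = ∑' n, fAux s n := rfl
  have e2 : (∑' n : ℕ, if n = 0 then 0 else ((μ n : ℂ)) ^ 2 / (n : ℂ) ^ s)
      = ∑' n, gAux s n := rfl
  rw [e1, e2, ← hF.tprod_eq, ← hG.tprod_eq]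
  have hfacfun : (fun p : Nat.Primes =>
      (1 + (2 - 1 / ((p : ℕ) : ℂ)) /
        ((1 - 1 / ((p : ℕ) : ℂ)) ^ 2 * ((p : ℕ) : ℂ) * (((p : ℕ) : ℂ) ^ s + 1))))
      = fun p : Nat.Primes => (1 + fAux s (p : ℕ)) * ((1 : ℂ) + gAux s (p : ℕ))⁻¹ := by
    funext p
    rw [key_eq s hs p.prop]
    exact (mul_inv_cancel_right₀ (hGlne p) _).symm
  rw [hfacfun, Multipliable.tprod_mul hF.multipliable hMGinv, mul_assoc,
    ← Multipliable.tprod_mul hMGinv hG.multipliable]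
  have h1 : (fun p : Nat.Primes => ((1 : ℂ) + gAux s (p : ℕ))⁻¹ * (1 + gAux s (p : ℕ)))
      = fun _ => (1 : ℂ) := funext fun p => inv_mul_cancel₀ (hGlne p)
  rw [h1, tprod_one, mul_one]
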